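/- Let N be a positive integer and let ζ ∈ ℂ be a primitive N-th root of unity. Then there exists an integer k coprime to N such that ζ^(k²) = −ζ if and only if 16 divides N. -/

import Mathlib

private lemma sq_eq_one_neg_aux (x : ℂ) (h : x ^ 2 = 1) (h1 : x ≠ 1) : x = -1 := by
  have h0 : (x - 1) * (x + 1) = 0 := by linear_combination h
  rcases mul_eq_zero.mp h0 with h' | h'
  · exact absurd (sub_eq_zero.mp h') h1
  · exact eq_neg_of_add_eq_zero_left h'

/-- Let `N` be a positive integer and `ζ ∈ ℂ` a primitive `N`-th root of
unity.  Then there exists an integer `k` coprime to `N` such that `ζ ^ (k²) = -ζ` if and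
only if `16 ∣ N`. -/
theorem primitiveRoot_squareGaloisConjugate_neg_iff_sixteen_dvd
    (N : ℕ) (hN : 0 < N) (ζ : ℂ) (hζ : IsPrimitiveRoot ζ N) :
    (∃ k : ℤ, IsCoprime k (N : ℤ) ∧ ζ ^ (k ^ 2) = -ζ) ↔ 16 ∣ N := by
  have hζ0 : ζ ≠ 0 := hζ.ne_zero hN.ne'
  constructor
  · rintro ⟨k, hk, h⟩
    -- `ζ ^ (k² - 1) = -1`
    have hneg : ζ ^ (k ^ 2 - 1) = -1 := by
      rw [zpow_sub₀ hζ0, h, zpow_one]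
      field_simp
    have hne1 : ζ ^ (k ^ 2 - 1) ≠ 1 := by
      rw [hneg]; intro hcon
      have : (1 : ℂ) + 1 = 0 := by linear_combination -hcon
      norm_num at this
    have hndvd : ¬ ((N : ℤ) ∣ (k ^ 2 - 1)) := fun hd =>
      hne1 ((hζ.zpow_eq_one_iff_dvd _).mpr hd)
    -- `N` is even
    rcases Nat.even_or_odd N with hev | hodd
    · obtain ⟨M, hM⟩ := hev
      have hM0 : 0 < M := by omega
      -- `ζ ^ M = -1`
      have hMsq : (ζ ^ M) ^ 2 = 1 := by
        rw [← pow_mul]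
        have : M * 2 = N := by omega
        rw [this, hζ.pow_eq_one]
      have hMne : ζ ^ M ≠ 1 := hζ.pow_ne_one_of_pos_of_lt hM0.ne' (by omega)
      have hMneg : ζ ^ M = -1 := sq_eq_one_neg_aux _ hMsq hMne
      -- `N ∣ k² - 1 - M`
      have hdvd : (N : ℤ) ∣ (k ^ 2 - 1 - (M : ℤ)) := by
        rw [← hζ.zpow_eq_one_iff_dvd]
        rw [zpow_sub₀ hζ0, hneg, zpow_natCast, hMneg]
        norm_num
      -- `k` is odd
      have hkodd : Odd k := by
        rcases Int.even_or_odd k with ⟨j, hj⟩ | ho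
        · exfalso
          have h2 : IsUnit (2 : ℤ) :=
            hk.isUnit_of_dvd' ⟨j, by omega⟩ ⟨(M : ℤ), by push_cast [hM]; ring⟩
          rw [Int.isUnit_iff] at h2
          omega
        · exact ho
      -- `8 ∣ k² - 1`
      obtain ⟨j, hj⟩ := hkodd
      obtain ⟨c, hc⟩ := Int.even_mul_succ_self j
      have h8' : (8 : ℤ) ∣ k ^ 2 - 1 := ⟨c, by subst hj; linear_combination 4 * hc⟩
      -- cascade of divisibility
      obtain ⟨t, ht⟩ := hdvd
      obtain ⟨e, he⟩ := h8'
      -- k^2 - 1 - M = N * t = 2 * M * t,  k^2 - 1 = 8 e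
      have hMN : (N : ℤ) = 2 * (M : ℤ) := by push_cast [hM]; ring
      rw [hMN] at ht
      have h1 : (2 : ℤ) ∣ (M : ℤ) := by
        have key : 8 * e - (M : ℤ) = 2 * ((M : ℤ) * t) := by linarith [ht, he]
        generalize (M : ℤ) * t = s at key
        omega
      obtain ⟨M1, hM1⟩ := h1
      have h2 : (2 : ℤ) ∣ M1 := by
        have key : 4 * e - M1 = 2 * (M1 * t) := by
          have : 8 * e - 2 * M1 = 2 * (2 * M1 * t) := by rw [← hM1]; linarith [ht, he]
          linarith
        generalize M1 * t = s at key
        omega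
      obtain ⟨M2, hM2⟩ := h2
      have h3 : (2 : ℤ) ∣ M2 := by
        have key : 2 * e - M2 = 2 * (M2 * t) := by
          have : 8 * e - 4 * M2 = 2 * (4 * M2 * t) := by
            rw [show (4:ℤ) * M2 = 2 * M1 by rw [hM2]; ring, ← hM1]
            have : M1 * t = 2 * M2 * t := by rw [hM2]
            linarith [ht, he, this]
          linarith
        generalize M2 * t = s at key
        omega
      obtain ⟨M3, hM3⟩ := h3
      have : (16 : ℤ) ∣ (N : ℤ) := ⟨M3, by rw [hMN, hM1, hM2, hM3]; ring⟩
      exact_mod_cast this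
    · -- odd case: contradiction
      exfalso
      obtain ⟨m, hm⟩ := hodd
      have hcop : IsCoprime ((N : ℤ)) 2 := ⟨1, -m, by push_cast [hm]; ring⟩
      have h2dvd : (N : ℤ) ∣ 2 * (k ^ 2 - 1) := by
        rw [← hζ.zpow_eq_one_iff_dvd]
        rw [mul_comm, zpow_mul, hneg]
        norm_num
      exact hndvd (hcop.dvd_of_dvd_mul_left h2dvd)
  · rintro ⟨n, hn⟩
    have hn0 : 0 < n := by omega
    refine ⟨4 * (n : ℤ) + 1, ⟨1 - 4 * (n : ℤ), (n : ℤ), by push_cast [hn]; ring⟩, ?_⟩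
    -- ζ ^ ((4n+1)^2) = ζ ^ (1 + 8n) since N ∣ 16 n²
    have hdvd : (N : ℤ) ∣ ((4 * (n : ℤ) + 1) ^ 2 - (1 + 8 * (n : ℤ))) := by
      refine ⟨(n : ℤ), ?_⟩
      push_cast [hn]; ring
    have hstep : ζ ^ ((4 * (n : ℤ) + 1) ^ 2) = ζ ^ (1 + 8 * (n : ℤ)) := by
      have h1 : ζ ^ ((4 * (n : ℤ) + 1) ^ 2 - (1 + 8 * (n : ℤ))) = 1 :=
        (hζ.zpow_eq_one_iff_dvd _).mpr hdvd
      calc ζ ^ ((4 * (n : ℤ) + 1) ^ 2)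
          = ζ ^ ((4 * (n : ℤ) + 1) ^ 2 - (1 + 8 * (n : ℤ))) * ζ ^ (1 + 8 * (n : ℤ)) := by
            rw [← zpow_add₀ hζ0]; ring_nf
        _ = ζ ^ (1 + 8 * (n : ℤ)) := by rw [h1, one_mul]
    have hhalf : ζ ^ (8 * n) = -1 := by
      have hsq : (ζ ^ (8 * n)) ^ 2 = 1 := by
        rw [← pow_mul]
        have : 8 * n * 2 = N := by omega
        rw [this, hζ.pow_eq_one]
      have hne : ζ ^ (8 * n) ≠ 1 :=
        hζ.pow_ne_one_of_pos_of_lt (by omega) (by omega)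
      exact sq_eq_one_neg_aux _ hsq hne
    rw [hstep, zpow_add₀ hζ0, zpow_one]
    have : ζ ^ (8 * (n : ℤ)) = -1 := by
      rw [show (8 * (n : ℤ)) = ((8 * n : ℕ) : ℤ) by push_cast; ring, zpow_natCast, hhalf]
    rw [this]
    ring
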